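/- (Existence of special convex combinations along a block sequence) Let (y_k)_{k=1}^∞ be a block sequence in c_00, ε > 0 and n ∈ ℕ. Then there is a finite interval E ⊆ ℕ and nonnegative coefficients (b_k)_{k∈E} with ∑_{k∈E} b_k^2 = 1 such that ∑_{k∈E} b_k y_k is a (2, ε, n)-special convex combination, i.e. ∑_{k∈E} b_k e_{t_k} with t_k = maxsupp y_k is a (2, ε, n)-basic special convex combination. -/

import Mathlib

/-- The first Schreier family: finite sets `F` with `|F| ≤ min F`. -/
def SchreierOne : Set (Finset ℕ) := {F | ∀ k ∈ F, F.card ≤ k}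

/-- The minimum of a finite set of naturals (0 for the empty set). -/
noncomputable def finMin (F : Finset ℕ) : ℕ := sInf {k | k ∈ F}

/-- The convolution `P[Q]` of two families of finite subsets of ℕ:
unions of successive members of `Q` whose minima form a set in `P`. -/
def conv (P Q : Set (Finset ℕ)) : Set (Finset ℕ) :=
  {U | ∃ (d : ℕ) (F : Fin d → Finset ℕ),
    (∀ i, F i ∈ Q) ∧ (∀ i, (F i).Nonempty) ∧
    (∀ i j : Fin d, i < j → ∀ a ∈ F i, ∀ b ∈ F j, a < b) ∧
    (Finset.univ.image fun i => finMin (F i)) ∈ P ∧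
    U = Finset.univ.biUnion F}

/-- The modified convolution `P[Q]_M`: unions of pairwise disjoint members of `Q`
whose minima form a set in `P`. -/
def mconv (P Q : Set (Finset ℕ)) : Set (Finset ℕ) :=
  {U | ∃ (d : ℕ) (F : Fin d → Finset ℕ),
    (∀ i, F i ∈ Q) ∧ (∀ i, (F i).Nonempty) ∧
    (∀ i j : Fin d, i ≠ j → Disjoint (F i) (F j)) ∧
    (Finset.univ.image fun i => finMin (F i)) ∈ P ∧
    U = Finset.univ.biUnion F}

/-- The Schreier families `S_n` (indexed so that `Schreier 1 = S_1`,
`Schreier (n+1) = S_1[S_n]`). -/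
def Schreier : ℕ → Set (Finset ℕ)
  | 0 => {F | F.card ≤ 1}
  | 1 => SchreierOne
  | (n+2) => conv SchreierOne (Schreier (n+1))

/-- The modified Schreier families `S^M_n`. -/
def SchreierM : ℕ → Set (Finset ℕ)
  | 0 => {F | F.card ≤ 1}
  | 1 => SchreierOne
  | (n+2) => mconv SchreierOne (SchreierM (n+1))

/-- The maximum of the support of an element of `c_00` (0 if empty). -/
noncomputable def maxsupp (f : ℕ →₀ ℝ) : ℕ := sSup {k | f k ≠ 0}

/-- The minimum of the support of an element of `c_00` (0 if empty). -/
noncomputable def minsupp (f : ℕ →₀ ℝ) : ℕ := sInf {k | f k ≠ 0}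



open Finset

lemma strictMono_add_le {t : ℕ → ℕ} (ht : StrictMono t) {a b : ℕ} (h : a ≤ b) :
    t a + (b - a) ≤ t b := by
  induction b with
  | zero => have : a = 0 := by omega
            subst this; simp
  | succ m ih =>
    rcases Nat.lt_or_ge a (m+1) with h' | h'
    · have h1 := ih (by omega)
      have h2 : t m < t (m + 1) := ht (Nat.lt_succ_self m)
      omega
    · have : a = m + 1 := by omega
      subst this; simp

lemma strictMono_add_le' {t : ℕ → ℕ} (ht : StrictMono t) {a b : ℕ} (h : a ≤ b) :
    t a + b ≤ t b + a := by
  have := strictMono_add_le ht h; omega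

lemma finMin_mem {F : Finset ℕ} (h : F.Nonempty) : finMin F ∈ F := by
  have : {k | k ∈ F}.Nonempty := ⟨h.choose, h.choose_spec⟩
  exact Nat.sInf_mem this

lemma finMin_le {F : Finset ℕ} {x : ℕ} (h : x ∈ F) : finMin F ≤ x :=
  Nat.sInf_le h

lemma le_finMin {F : Finset ℕ} {x : ℕ} (h : F.Nonempty) (hx : ∀ y ∈ F, x ≤ y) :
    x ≤ finMin F := hx _ (finMin_mem h)

lemma finMin_image_Icc {t : ℕ → ℕ} (ht : StrictMono t) {a c : ℕ} (h : a ≤ c) :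
    finMin ((Finset.Icc a c).image t) = t a := by
  apply le_antisymm
  · exact finMin_le (mem_image_of_mem t (by simp [h]))
  · apply le_finMin ⟨t a, mem_image_of_mem t (by simp [h])⟩
    rintro y hy
    simp only [mem_image, mem_Icc] at hy
    obtain ⟨k, ⟨hk, _⟩, rfl⟩ := hy
    exact ht.monotone hk

lemma singleton_mem_schreier_zero (x : ℕ) : ({x} : Finset ℕ) ∈ Schreier 0 := by
  simp [Schreier]

lemma schreier_succ_eq {n : ℕ} (hn : 1 ≤ n) :
    Schreier (n + 1) = conv SchreierOne (Schreier n) := by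
  match n, hn with
  | (m+1), _ => rfl

lemma decomp {n : ℕ} (hn : 1 ≤ n) {G : Finset ℕ} (hG : G ∈ Schreier n)
    (hne : G.Nonempty) :
    ∃ (r : ℕ) (P : Fin r → Finset ℕ),
      (∀ s, P s ∈ Schreier (n - 1)) ∧ (∀ s, (P s).Nonempty) ∧
      (∀ s s' : Fin r, s < s' → ∀ x ∈ P s, ∀ y ∈ P s', x < y) ∧
      G = Finset.univ.biUnion P ∧ r ≤ G.min' hne := by
  match n, hn with
  | 1, _ =>
    refine ⟨G.card, fun s => {(G.orderIsoOfFin rfl s : ℕ)}, ?_, ?_, ?_, ?_, ?_⟩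
    · intro s; exact singleton_mem_schreier_zero _
    · intro s; exact ⟨_, mem_singleton_self _⟩
    · intro s s' hss x hx y hy
      rw [mem_singleton] at hx hy
      subst hx; subst hy
      exact_mod_cast (G.orderIsoOfFin rfl).strictMono hss
    · ext g
      simp only [mem_biUnion, mem_univ, true_and, mem_singleton]
      constructor
      · intro hg
        exact ⟨(G.orderIsoOfFin rfl).symm ⟨g, hg⟩, by simp⟩
      · rintro ⟨s, rfl⟩
        exact (G.orderIsoOfFin rfl s).2
    · exact hG _ (G.min'_mem hne)
  | (m + 2), _ =>
    obtain ⟨d, F, hFmem, hFne, hsucc, hmins, hU⟩ := hG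
    have hrle : d ≤ G.min' hne := by
      -- the minimum of G lies in some F i, and finMin (F i) ≤ it
      have hmem : G.min' hne ∈ G := G.min'_mem hne
      have hmem2 : G.min' hne ∈ Finset.univ.biUnion F := by rw [← hU]; exact hmem
      simp only [mem_biUnion, mem_univ, true_and] at hmem2
      obtain ⟨i, hi⟩ := hmem2
      have h1 : finMin (F i) ≤ G.min' hne := finMin_le hi
      -- card of the image of finMins is d
      have hinj : Function.Injective fun i => finMin (F i) := by
        intro i j hij
        by_contra hne'
        rcases lt_or_gt_of_ne hne' with h | h
        · exact absurd hij (Nat.ne_of_lt (hsucc i j h _ (finMin_mem (hFne i)) _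
            (finMin_mem (hFne j))))
        · exact absurd hij.symm (Nat.ne_of_lt (hsucc j i h _ (finMin_mem (hFne j)) _
            (finMin_mem (hFne i))))
      have hcard : (Finset.univ.image fun i => finMin (F i)).card = d := by
        rw [Finset.card_image_of_injective _ hinj, Finset.card_univ, Fintype.card_fin]
      have h2 : d ≤ finMin (F i) := by
        have := hmins (finMin (F i)) (mem_image_of_mem _ (mem_univ i))
        rwa [hcard] at this
      omega
    exact ⟨d, F, hFmem, hFne, hsucc, hU, hrle⟩

/-- The inductive statement for constructing `(1, 8/t a, n)`-sccs starting exactly at `a`. -/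
def KeyProp (t : ℕ → ℕ) (n a : ℕ) : Prop :=
  ∃ (c : ℕ) (μ : ℕ → ℝ), a ≤ c ∧ a + t a ≤ c + 1 ∧ (∀ k, 0 ≤ μ k) ∧
    (∑ k ∈ Finset.Icc a c, μ k) = 1 ∧
    ((Finset.Icc a c).image t) ∈ Schreier n ∧
    ∀ m < n, ∀ G ∈ Schreier m,
      (∑ k ∈ (Finset.Icc a c).filter (fun k => t k ∈ G), μ k) ≤ 8 / (t a : ℝ)

lemma le_t {t : ℕ → ℕ} (ht : StrictMono t) (a : ℕ) : a ≤ t a := by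
  have := strictMono_add_le ht (Nat.zero_le a); omega

lemma key_base {t : ℕ → ℕ} (ht : StrictMono t) (a : ℕ) (ha : 16 ≤ a) :
    KeyProp t 1 a := by
  have hta : a ≤ t a := le_t ht a
  have hta1 : 1 ≤ t a := by omega
  have htaR : (0:ℝ) < (t a : ℝ) := by exact_mod_cast hta1
  refine ⟨a + t a - 1, fun _ => (t a : ℝ)⁻¹, by omega, by omega, fun k => by positivity,
    ?_, ?_, ?_⟩
  · rw [Finset.sum_const, Nat.card_Icc]
    have : a + t a - 1 + 1 - a = t a := by omega
    rw [this, nsmul_eq_mul, mul_inv_cancel₀ (ne_of_gt htaR)]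
  · intro x hx
    simp only [mem_image, mem_Icc] at hx
    obtain ⟨k, ⟨hk, _⟩, rfl⟩ := hx
    calc ((Finset.Icc a (a + t a - 1)).image t).card ≤ (Finset.Icc a (a + t a - 1)).card :=
          Finset.card_image_le
      _ = t a := by rw [Nat.card_Icc]; omega
      _ ≤ t k := ht.monotone hk
  · intro m hm G hG
    interval_cases m
    have hGcard : G.card ≤ 1 := hG
    have hfil : ((Finset.Icc a (a + t a - 1)).filter (fun k => t k ∈ G)).card ≤ 1 := by
      calc ((Finset.Icc a (a + t a - 1)).filter (fun k => t k ∈ G)).card ≤ G.card := by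
            apply Finset.card_le_card_of_injOn t
            · intro k hk; exact (Finset.mem_filter.mp hk).2
            · intro k _ k' _ h; exact ht.injective h
        _ ≤ 1 := hGcard
    rw [Finset.sum_const, nsmul_eq_mul]
    calc (((Finset.Icc a (a + t a - 1)).filter (fun k => t k ∈ G)).card : ℝ) * (t a : ℝ)⁻¹
        ≤ 1 * (t a : ℝ)⁻¹ := by
          apply mul_le_mul_of_nonneg_right _ (by positivity)
          exact_mod_cast hfil
      _ ≤ 8 / (t a : ℝ) := by rw [one_mul, div_eq_mul_inv]; nlinarith [inv_nonneg.mpr htaR.le]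

lemma key_step {t : ℕ → ℕ} (ht : StrictMono t) {n : ℕ} (hn : 1 ≤ n)
    (ih : ∀ x, 16 ≤ x → KeyProp t n x) (a : ℕ) (ha : 16 ≤ a) :
    KeyProp t (n + 1) a := by
  classical
  -- Skolemize the induction hypothesis
  have ih' : ∀ x, ∃ (c : ℕ) (μ : ℕ → ℝ), 16 ≤ x →
      (x ≤ c ∧ x + t x ≤ c + 1 ∧ (∀ k, 0 ≤ μ k) ∧
      (∑ k ∈ Finset.Icc x c, μ k) = 1 ∧
      ((Finset.Icc x c).image t) ∈ Schreier n ∧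
      ∀ m < n, ∀ G ∈ Schreier m,
        (∑ k ∈ (Finset.Icc x c).filter (fun k => t k ∈ G), μ k) ≤ 8 / (t x : ℝ)) := by
    intro x
    by_cases hx : 16 ≤ x
    · obtain ⟨c, μ, h⟩ := ih x hx
      exact ⟨c, μ, fun _ => h⟩
    · exact ⟨x, fun _ => 0, fun h => absurd h hx⟩
  choose C M hCM using ih'
  -- the sequence of starting points
  let A : ℕ → ℕ := fun i => Nat.rec a (fun _ p => C p + 1) i
  have hA0 : A 0 = a := rfl
  have hAs : ∀ i, A (i + 1) = C (A i) + 1 := fun _ => rfl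
  have hA16 : ∀ i, 16 ≤ A i := by
    intro i
    induction i with
    | zero => exact ha
    | succ m ihm =>
      have := (hCM (A m) ihm).1
      rw [hAs]; omega
  have hprops := fun i => hCM (A i) (hA16 i)
  have hC : ∀ i, A i ≤ C (A i) := fun i => (hprops i).1
  have hC1 : ∀ i, A i + t (A i) ≤ C (A i) + 1 := fun i => (hprops i).2.1
  have hM0 : ∀ i k, 0 ≤ M (A i) k := fun i => (hprops i).2.2.1
  have hMsum : ∀ i, (∑ k ∈ Finset.Icc (A i) (C (A i)), M (A i) k) = 1 :=
    fun i => (hprops i).2.2.2.1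
  have hMmem : ∀ i, ((Finset.Icc (A i) (C (A i))).image t) ∈ Schreier n :=
    fun i => (hprops i).2.2.2.2.1
  have hMest : ∀ i, ∀ m < n, ∀ G ∈ Schreier m,
      (∑ k ∈ (Finset.Icc (A i) (C (A i))).filter (fun k => t k ∈ G), M (A i) k)
        ≤ 8 / (t (A i) : ℝ) := fun i => (hprops i).2.2.2.2.2
  have hAstep : ∀ i, A i < A (i + 1) := by
    intro i; rw [hAs]; have := hC i; omega
  have hAmono : StrictMono A := strictMono_nat_of_lt_succ hAstep
  have hgrow : ∀ i, 2 * t (A i) ≤ t (A (i + 1)) := by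
    intro i
    have h1 := strictMono_add_le ht (hAstep i).le
    have h2 := hC1 i
    have h3 := hAs i
    omega
  have hta : a ≤ t a := le_t ht a
  set d := t a with hd
  have hd16 : 16 ≤ d := le_trans ha hta
  have hpow : ∀ i, 2 ^ i * d ≤ t (A i) := by
    intro i
    induction i with
    | zero => simp [hA0, hd]
    | succ m ihm =>
      have := hgrow m
      have : 2 ^ (m + 1) * d ≤ 2 * t (A m) := by rw [pow_succ]; nlinarith
      omega
  -- the interval and partition
  have hAd1 : 1 ≤ A d := by have := hA16 d; omega
  set c := A d - 1 with hcdef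
  have hc1 : c + 1 = A d := by omega
  have hac : a ≤ c := by
    have : A 0 < A d := hAmono (by omega : 0 < d)
    rw [hA0] at this; omega
  have hBIco : ∀ i, Finset.Icc (A i) (C (A i)) = Finset.Ico (A i) (A (i + 1)) := by
    intro i; rw [hAs, Finset.Ico_add_one_right_eq_Icc]
  have hpart : ∀ D : ℕ, Finset.Ico (A 0) (A D) =
      (Finset.range D).biUnion (fun i => Finset.Ico (A i) (A (i + 1))) := by
    intro D
    induction D with
    | zero => simp
    | succ m ihm =>
      rw [Finset.range_add_one, Finset.biUnion_insert, ← ihm,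
        Finset.union_comm, Finset.Ico_union_Ico_eq_Ico
          (hAmono.monotone (Nat.zero_le m)) (hAmono (Nat.lt_succ_self m)).le]
  have hIcc : Finset.Icc a c =
      (Finset.range d).biUnion (fun i => Finset.Ico (A i) (A (i + 1))) := by
    rw [← hpart d, ← hA0, ← hc1, Finset.Ico_add_one_right_eq_Icc]
  have hdisj : ∀ i ∈ Finset.range d, ∀ j ∈ Finset.range d, i ≠ j →
      Disjoint (Finset.Ico (A i) (A (i + 1))) (Finset.Ico (A j) (A (j + 1))) := by
    intro i _ j _ hij
    rcases Nat.lt_or_ge i j with h | h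
    · apply Finset.disjoint_left.mpr
      intro k hk hk'
      simp only [Finset.mem_Ico] at hk hk'
      have : A (i + 1) ≤ A j := hAmono.monotone h
      omega
    · have h' : j < i := by omega
      apply Finset.disjoint_right.mpr
      intro k hk hk'
      simp only [Finset.mem_Ico] at hk hk'
      have : A (j + 1) ≤ A i := hAmono.monotone h'
      omega
  -- the masses
  set μ : ℕ → ℝ := fun k => ∑ i ∈ Finset.range d,
    if k ∈ Finset.Ico (A i) (A (i + 1)) then M (A i) k / d else 0 with hμdef
  have hdpos : (0:ℝ) < d := by exact_mod_cast (by omega : 0 < d)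
  have hμ0 : ∀ k, 0 ≤ μ k := by
    intro k
    apply Finset.sum_nonneg
    intro i _
    split
    · exact div_nonneg (hM0 i k) hdpos.le
    · exact le_refl 0
  have hμeq : ∀ i ∈ Finset.range d, ∀ k ∈ Finset.Ico (A i) (A (i + 1)),
      μ k = M (A i) k / d := by
    intro i hi k hk
    have h0 : ∀ j ∈ Finset.range d, j ≠ i →
        (if k ∈ Finset.Ico (A j) (A (j + 1)) then M (A j) k / (d:ℝ) else 0) = 0 := by
      intro j hj hji
      rw [if_neg]
      intro hk'
      exact (Finset.disjoint_left.mp (hdisj j hj i hi hji) hk' hk).elim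
    show (∑ j ∈ Finset.range d,
        if k ∈ Finset.Ico (A j) (A (j + 1)) then M (A j) k / (d:ℝ) else 0) = _
    rw [Finset.sum_eq_single_of_mem i hi h0, if_pos hk]
  -- splitting sums over the partition
  have hsplit : ∀ (p : ℕ → Prop) [DecidablePred p],
      (∑ k ∈ (Finset.Icc a c).filter (fun k => p k), μ k) =
      ∑ i ∈ Finset.range d,
        ∑ k ∈ (Finset.Icc (A i) (C (A i))).filter (fun k => p k), M (A i) k / d := by
    intro p _
    rw [hIcc, Finset.filter_biUnion, Finset.sum_biUnion]
    · apply Finset.sum_congr rfl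
      intro i hi
      rw [hBIco i]
      apply Finset.sum_congr rfl
      intro k hk
      exact hμeq i hi k (Finset.mem_filter.mp hk).1
    · intro i hi j hj hij
      exact Finset.disjoint_filter_filter (hdisj i hi j hj hij)
  have hblocksum : ∀ i, (∑ k ∈ Finset.Icc (A i) (C (A i)), M (A i) k / d) = 1 / d := by
    intro i
    rw [← Finset.sum_div, hMsum i]
  have hμsum : (∑ k ∈ Finset.Icc a c, μ k) = 1 := by
    have h := hsplit (fun _ => True)
    simp only [Finset.filter_true] at h
    rw [h]
    calc ∑ i ∈ Finset.range d, ∑ k ∈ Finset.Icc (A i) (C (A i)), M (A i) k / (d:ℝ)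
        = ∑ _i ∈ Finset.range d, 1/(d:ℝ) := Finset.sum_congr rfl (fun i _ => hblocksum i)
      _ = 1 := by
          rw [Finset.sum_const, Finset.card_range, nsmul_eq_mul]
          field_simp
  refine ⟨c, μ, hac, ?_, hμ0, hμsum, ?_, ?_⟩
  · -- a + t a ≤ c + 1
    have h1 := hC1 0
    have h2 : A 1 ≤ A d := hAmono.monotone (by omega : 1 ≤ d)
    rw [hA0] at h1
    rw [show A 1 = C (A 0) + 1 from hAs 0, hA0] at h2
    omega
  · -- membership in Schreier (n+1)
    rw [schreier_succ_eq hn]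
    refine ⟨d, fun i => (Finset.Icc (A i.val) (C (A i.val))).image t,
      fun i => hMmem i.val, fun i => (Finset.nonempty_Icc.mpr (hC i.val)).image t,
      ?_, ?_, ?_⟩
    · intro i j hij x hx y hy
      simp only [Finset.mem_image, Finset.mem_Icc] at hx hy
      obtain ⟨k, ⟨hk1, hk2⟩, rfl⟩ := hx
      obtain ⟨k', ⟨hk1', hk2'⟩, rfl⟩ := hy
      apply ht
      have h1 : C (A i.val) + 1 = A (i.val + 1) := (hAs i.val).symm
      have h2 : A (i.val + 1) ≤ A j.val := hAmono.monotone (by exact hij)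
      omega
    · have heq : (Finset.univ.image fun i : Fin d =>
          finMin ((Finset.Icc (A i.val) (C (A i.val))).image t)) =
          Finset.univ.image fun i : Fin d => t (A i.val) :=
        Finset.image_congr (fun i _ => finMin_image_Icc ht (hC i.val))
      rw [heq]
      intro x hx
      simp only [Finset.mem_image, Finset.mem_univ, true_and] at hx
      obtain ⟨i, rfl⟩ := hx
      calc (Finset.univ.image fun i : Fin d => t (A i.val)).card
          ≤ (Finset.univ : Finset (Fin d)).card := Finset.card_image_le
        _ = d := by simp
        _ = t (A 0) := by rw [hA0]
        _ ≤ t (A i.val) := ht.monotone (hAmono.monotone (Nat.zero_le _))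
    · rw [hIcc, Finset.biUnion_image]
      ext x
      simp only [Finset.mem_biUnion, Finset.mem_range, Finset.mem_univ, true_and]
      constructor
      · rintro ⟨i, hi, hx⟩
        exact ⟨⟨i, hi⟩, by rwa [hBIco]⟩
      · rintro ⟨i, hx⟩
        exact ⟨i.val, i.isLt, by rwa [← hBIco]⟩
  · -- the estimate
    intro m hm G hG
    rw [hsplit (fun k => t k ∈ G)]
    have htad : ((t a : ℕ) : ℝ) = (d : ℝ) := by rw [hd]
    have hScast : ∀ i ∈ Finset.range d,
        (∑ k ∈ (Finset.Icc (A i) (C (A i))).filter (fun k => t k ∈ G), M (A i) k / (d:ℝ)) =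
        (∑ k ∈ (Finset.Icc (A i) (C (A i))).filter (fun k => t k ∈ G), M (A i) k) / (d:ℝ) :=
      fun i _ => (Finset.sum_div _ _ _).symm
    have hS0 : ∀ i (H : Finset ℕ),
        0 ≤ ∑ k ∈ (Finset.Icc (A i) (C (A i))).filter (fun k => t k ∈ H), M (A i) k :=
      fun i H => Finset.sum_nonneg (fun k _ => hM0 i k)
    have hS1 : ∀ i (H : Finset ℕ),
        (∑ k ∈ (Finset.Icc (A i) (C (A i))).filter (fun k => t k ∈ H), M (A i) k) ≤ 1 := by
      intro i H
      rw [← hMsum i]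
      exact Finset.sum_le_sum_of_subset_of_nonneg (Finset.filter_subset _ _)
        (fun k _ _ => hM0 i k)
    have htApos : ∀ i, (0:ℝ) < (t (A i) : ℝ) := by
      intro i
      have h1 := hpow i
      have h2 : 0 < 2 ^ i * d := by positivity
      have : 0 < t (A i) := by omega
      exact_mod_cast this
    rcases Nat.lt_succ_iff_lt_or_eq.mp hm with hm' | rfl
    · -- easy case : m < n, use the inner estimate directly on G
      calc ∑ i ∈ Finset.range d,
            ∑ k ∈ (Finset.Icc (A i) (C (A i))).filter (fun k => t k ∈ G), M (A i) k / (d:ℝ)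
          ≤ ∑ i ∈ Finset.range d, (8/(d:ℝ)/(d:ℝ)) * (1/2:ℝ)^i := by
            apply Finset.sum_le_sum
            intro i hi
            rw [hScast i hi]
            have h1 : (∑ k ∈ (Finset.Icc (A i) (C (A i))).filter (fun k => t k ∈ G),
                M (A i) k) ≤ 8 / (t (A i) : ℝ) := hMest i m hm' G hG
            have h2 : (8:ℝ) / (t (A i) : ℝ) ≤ 8 / ((2:ℝ)^i * d) := by
              apply div_le_div_of_nonneg_left (by norm_num) (by positivity)
              exact_mod_cast hpow i
            have h3 : (8:ℝ) / ((2:ℝ)^i * d) / d = 8/(d:ℝ)/(d:ℝ) * (1/2:ℝ)^i := by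
              rw [div_pow, one_pow]
              field_simp
            rw [← h3]
            apply div_le_div_of_nonneg_right (le_trans h1 h2) hdpos.le
          _ = (8/(d:ℝ)/(d:ℝ)) * ∑ i ∈ Finset.range d, (1/2:ℝ)^i := by
            rw [Finset.mul_sum]
          _ ≤ (8/(d:ℝ)/(d:ℝ)) * 2 := by
            apply mul_le_mul_of_nonneg_left (sum_geometric_two_le d) (by positivity)
          _ ≤ 8 / ((t a : ℕ) : ℝ) := by
            rw [htad]
            have h16 : (16:ℝ) ≤ d := by exact_mod_cast hd16
            have heq : (8:ℝ)/d/d*2 = 16/(d*d) := by field_simp; ring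
            rw [heq, div_le_div_iff₀ (by positivity) hdpos]
            nlinarith
    · -- hard case : m = n
      by_cases hex : ∃ i, i < d ∧
          ((Finset.Icc (A i) (C (A i))).filter (fun k => t k ∈ G)).Nonempty
      case neg =>
        have hzero : ∀ i ∈ Finset.range d,
            (∑ k ∈ (Finset.Icc (A i) (C (A i))).filter (fun k => t k ∈ G),
              M (A i) k / (d:ℝ)) = 0 := by
          intro i hi
          have hemp : ((Finset.Icc (A i) (C (A i))).filter (fun k => t k ∈ G)) = ∅ := by
            rw [← Finset.not_nonempty_iff_eq_empty]
            intro hne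
            exact hex ⟨i, Finset.mem_range.mp hi, hne⟩
          rw [hemp, Finset.sum_empty]
        rw [Finset.sum_eq_zero hzero]
        positivity
      case pos =>
        obtain ⟨hjd, hjne⟩ := Nat.find_spec hex
        set j := Nat.find hex with hjdef
        have hjmin : ∀ i < j, ¬(i < d ∧
            ((Finset.Icc (A i) (C (A i))).filter (fun k => t k ∈ G)).Nonempty) :=
          fun i hi => Nat.find_min hex hi
        obtain ⟨k₀, hk₀⟩ := hjne
        rw [Finset.mem_filter, Finset.mem_Icc] at hk₀
        obtain ⟨⟨hk₀1, hk₀2⟩, hk₀G⟩ := hk₀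
        have hGne : G.Nonempty := ⟨t k₀, hk₀G⟩
        obtain ⟨r, P, hPmem, hPne, hPsucc, hPU, hPr⟩ := decomp hn hG hGne
        have hPdisj : ∀ s s' : Fin r, s ≠ s' → Disjoint (P s) (P s') := by
          intro s s' hss
          rcases lt_or_gt_of_ne hss with h | h
          · exact Finset.disjoint_left.mpr
              (fun x hx hx' => lt_irrefl x (hPsucc s s' h x hx x hx'))
          · exact Finset.disjoint_left.mpr
              (fun x hx hx' => lt_irrefl x (hPsucc s' s h x hx' x hx))
        have hrb : 2 * r ≤ t (A (j + 2)) := by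
          have h1 : r ≤ G.min' hGne := hPr
          have h2 : G.min' hGne ≤ t k₀ := G.min'_le _ hk₀G
          have h3 : t k₀ ≤ t (C (A j)) := ht.monotone hk₀2
          have h4 : t (C (A j)) < t (A (j + 1)) := by
            apply ht
            rw [hAs]
            omega
          have h5 : 2 * t (A (j + 1)) ≤ t (A (j + 2)) := by
            have := hgrow (j + 1)
            have he : j + 1 + 1 = j + 2 := by omega
            rwa [he] at this
          omega
        have hsplitP : ∀ i, (Finset.Icc (A i) (C (A i))).filter (fun k => t k ∈ G) =
            Finset.univ.biUnion
              (fun s : Fin r =>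
                (Finset.Icc (A i) (C (A i))).filter (fun k => t k ∈ P s)) := by
          intro i
          ext k
          simp only [Finset.mem_filter, Finset.mem_biUnion, Finset.mem_univ, true_and]
          constructor
          · rintro ⟨hk, hkG⟩
            rw [hPU] at hkG
            simp only [Finset.mem_biUnion, Finset.mem_univ, true_and] at hkG
            obtain ⟨s, hs⟩ := hkG
            exact ⟨s, hk, hs⟩
          · rintro ⟨s, hk, hs⟩
            refine ⟨hk, ?_⟩
            rw [hPU]
            simp only [Finset.mem_biUnion, Finset.mem_univ, true_and]
            exact ⟨s, hs⟩
        have hSsplit : ∀ i, (∑ k ∈ (Finset.Icc (A i) (C (A i))).filter (fun k => t k ∈ G), M (A i) k)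
            = ∑ s : Fin r, ∑ k ∈ (Finset.Icc (A i) (C (A i))).filter (fun k => t k ∈ P s), M (A i) k := by
          intro i
          rw [hsplitP i, Finset.sum_biUnion]
          intro s hs s' hs' hss
          apply Finset.disjoint_left.mpr
          intro k hk hk'
          exact Finset.disjoint_left.mp (hPdisj s s' hss)
            (Finset.mem_filter.mp hk).2 (Finset.mem_filter.mp hk').2
        have hn1 : m - 1 < m := by omega
        have hT : ∀ i (s : Fin r), (∑ k ∈ (Finset.Icc (A i) (C (A i))).filter (fun k => t k ∈ P s), M (A i) k) ≤ 8 / (t (A i) : ℝ) :=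
          fun i s => hMest i (m - 1) hn1 (P s) (hPmem s)
        have hT0 : ∀ i (s : Fin r), 0 ≤ ∑ k ∈ (Finset.Icc (A i) (C (A i))).filter (fun k => t k ∈ P s), M (A i) k :=
          fun i s => Finset.sum_nonneg (fun k _ => hM0 i k)
        -- the three groups of blocks
        set W := Finset.Ico (j + 2) d with hWdef
        have hWsub : ∀ i ∈ W, i ∈ Finset.range d := by
          intro i hi
          rw [hWdef, Finset.mem_Ico] at hi
          exact Finset.mem_range.mpr hi.2
        have hfilW : (Finset.range d).filter (fun i => ¬ i < j + 2) = W := by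
          rw [hWdef]
          ext i
          simp only [Finset.mem_filter, Finset.mem_range, Finset.mem_Ico]
          omega
        have hfront : ∑ i ∈ (Finset.range d).filter (fun i => i < j + 2),
            (∑ k ∈ (Finset.Icc (A i) (C (A i))).filter (fun k => t k ∈ G), M (A i) k) ≤ 2 := by
          have hsub : ∑ i ∈ (Finset.range d).filter (fun i => i < j + 2), (∑ k ∈ (Finset.Icc (A i) (C (A i))).filter (fun k => t k ∈ G), M (A i) k)
              = ∑ i ∈ (Finset.range d).filter (fun i => j ≤ i ∧ i < j + 2), (∑ k ∈ (Finset.Icc (A i) (C (A i))).filter (fun k => t k ∈ G), M (A i) k) := by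
            symm
            apply Finset.sum_subset
            · intro i hi
              simp only [Finset.mem_filter] at hi ⊢
              exact ⟨hi.1, hi.2.2⟩
            · intro i hi hni
              simp only [Finset.mem_filter, Finset.mem_range] at hi hni
              have hij : i < j := by
                rcases Nat.lt_or_ge i j with h | h
                · exact h
                · exact absurd ⟨hi.1, h, hi.2⟩ hni
              have hemp : (Finset.Icc (A i) (C (A i))).filter (fun k => t k ∈ G) = ∅ := by
                rw [← Finset.not_nonempty_iff_eq_empty]
                intro hne
                exact hjmin i hij ⟨by omega, hne⟩
              rw [hemp, Finset.sum_empty]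
          rw [hsub]
          have hcard : ((Finset.range d).filter (fun i => j ≤ i ∧ i < j + 2)).card ≤ 2 := by
            have hsub2 : (Finset.range d).filter (fun i => j ≤ i ∧ i < j + 2)
                ⊆ Finset.Ico j (j + 2) := by
              intro i hi
              simp only [Finset.mem_filter, Finset.mem_range, Finset.mem_Ico] at hi ⊢
              omega
            calc ((Finset.range d).filter (fun i => j ≤ i ∧ i < j + 2)).card
                ≤ (Finset.Ico j (j + 2)).card := Finset.card_le_card hsub2
              _ = 2 := by rw [Nat.card_Ico]; omega
          calc ∑ i ∈ (Finset.range d).filter (fun i => j ≤ i ∧ i < j + 2), (∑ k ∈ (Finset.Icc (A i) (C (A i))).filter (fun k => t k ∈ G), M (A i) k)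
              ≤ ∑ _i ∈ (Finset.range d).filter (fun i => j ≤ i ∧ i < j + 2), (1:ℝ) :=
                Finset.sum_le_sum (fun i _ => hS1 i G)
            _ = ((Finset.range d).filter (fun i => j ≤ i ∧ i < j + 2)).card := by
                rw [Finset.sum_const, nsmul_eq_mul, mul_one]
            _ ≤ 2 := by exact_mod_cast hcard
        -- the tail
        have htail : ∑ i ∈ W, (∑ k ∈ (Finset.Icc (A i) (C (A i))).filter (fun k => t k ∈ G), M (A i) k) ≤ 5 := by
          have h1 : ∀ i ∈ W, (∑ k ∈ (Finset.Icc (A i) (C (A i))).filter (fun k => t k ∈ G), M (A i) k) = ∑ s : Fin r, ∑ k ∈ (Finset.Icc (A i) (C (A i))).filter (fun k => t k ∈ P s), M (A i) k := fun i _ => hSsplit i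
          rw [Finset.sum_congr rfl h1, Finset.sum_comm]
          have hmeets : ∀ (s : Fin r) i,
              i ∈ W.filter (fun i =>
                ((Finset.Icc (A i) (C (A i))).filter (fun k => t k ∈ P s)).Nonempty) →
              ∃ k, k ∈ Finset.Icc (A i) (C (A i)) ∧ t k ∈ P s := by
            intro s i hi
            obtain ⟨k, hk⟩ := (Finset.mem_filter.mp hi).2
            rw [Finset.mem_filter] at hk
            exact ⟨k, hk.1, hk.2⟩
          have hTzero : ∀ s : Fin r, ∀ i ∈ W,
              i ∉ W.filter (fun i =>
                ((Finset.Icc (A i) (C (A i))).filter (fun k => t k ∈ P s)).Nonempty) →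
              (∑ k ∈ (Finset.Icc (A i) (C (A i))).filter (fun k => t k ∈ P s), M (A i) k) = 0 := by
            intro s i hiW hiI
            have hemp : ((Finset.Icc (A i) (C (A i))).filter (fun k => t k ∈ P s)) = ∅ := by
              rw [← Finset.not_nonempty_iff_eq_empty]
              intro hne
              exact hiI (Finset.mem_filter.mpr ⟨hiW, hne⟩)
            rw [hemp, Finset.sum_empty]
          have h2 : ∀ s : Fin r, (∑ i ∈ W, (∑ k ∈ (Finset.Icc (A i) (C (A i))).filter (fun k => t k ∈ P s), M (A i) k))
              = ∑ i ∈ W.filter (fun i =>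
                  ((Finset.Icc (A i) (C (A i))).filter (fun k => t k ∈ P s)).Nonempty),
                  (∑ k ∈ (Finset.Icc (A i) (C (A i))).filter (fun k => t k ∈ P s), M (A i) k) :=
            fun s => (Finset.sum_subset (Finset.filter_subset _ _) (hTzero s)).symm
          rw [Finset.sum_congr rfl (fun s _ => h2 s)]
          have hkey : ∀ s s' : Fin r, s < s' → ∀ i,
              i ∈ ((W.filter (fun i => ((Finset.Icc (A i) (C (A i))).filter (fun k => t k ∈ P s)).Nonempty))).erase (finMin (W.filter (fun i => ((Finset.Icc (A i) (C (A i))).filter (fun k => t k ∈ P s)).Nonempty))) →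
              i ∈ ((W.filter (fun i => ((Finset.Icc (A i) (C (A i))).filter (fun k => t k ∈ P s')).Nonempty))).erase (finMin (W.filter (fun i => ((Finset.Icc (A i) (C (A i))).filter (fun k => t k ∈ P s')).Nonempty))) → False := by
            intro s s' hss i hi hi'
            have hiIs : i ∈ (W.filter (fun i => ((Finset.Icc (A i) (C (A i))).filter (fun k => t k ∈ P s)).Nonempty)) := Finset.mem_of_mem_erase hi
            have hiIs' : i ∈ (W.filter (fun i => ((Finset.Icc (A i) (C (A i))).filter (fun k => t k ∈ P s')).Nonempty)) := Finset.mem_of_mem_erase hi'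
            have hfm' : finMin (W.filter (fun i => ((Finset.Icc (A i) (C (A i))).filter (fun k => t k ∈ P s')).Nonempty)) ∈ (W.filter (fun i => ((Finset.Icc (A i) (C (A i))).filter (fun k => t k ∈ P s')).Nonempty)) := finMin_mem ⟨i, hiIs'⟩
            have hfmlt : finMin (W.filter (fun i => ((Finset.Icc (A i) (C (A i))).filter (fun k => t k ∈ P s')).Nonempty)) < i :=
              lt_of_le_of_ne (finMin_le hiIs') (Ne.symm (Finset.mem_erase.mp hi').1)
            obtain ⟨k', hk'mem, hk'P⟩ := hmeets s' _ hfm'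
            obtain ⟨k, hkmem, hkP⟩ := hmeets s i hiIs
            have h1 : k' ≤ C (A (finMin (W.filter (fun i => ((Finset.Icc (A i) (C (A i))).filter (fun k => t k ∈ P s')).Nonempty)))) := (Finset.mem_Icc.mp hk'mem).2
            have h2 : A i ≤ k := (Finset.mem_Icc.mp hkmem).1
            have h3pre : finMin (W.filter (fun i => ((Finset.Icc (A i) (C (A i))).filter (fun k => t k ∈ P s')).Nonempty)) + 1 ≤ i := by omega
            have h3 : A (finMin (W.filter (fun i => ((Finset.Icc (A i) (C (A i))).filter (fun k => t k ∈ P s')).Nonempty)) + 1) ≤ A i := hAmono.monotone h3pre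
            have h4 : k' < k := by
              have h5 := hAs (finMin (W.filter (fun i => ((Finset.Icc (A i) (C (A i))).filter (fun k => t k ∈ P s')).Nonempty)))
              omega
            have h5 : t k < t k' := hPsucc s s' hss _ hkP _ hk'P
            have h6 : t k' < t k := ht h4
            omega
          have hEdisj : ∀ s s' : Fin r, s ≠ s' →
              Disjoint (((W.filter (fun i => ((Finset.Icc (A i) (C (A i))).filter (fun k => t k ∈ P s)).Nonempty))).erase (finMin (W.filter (fun i => ((Finset.Icc (A i) (C (A i))).filter (fun k => t k ∈ P s)).Nonempty))))
                (((W.filter (fun i => ((Finset.Icc (A i) (C (A i))).filter (fun k => t k ∈ P s')).Nonempty))).erase (finMin (W.filter (fun i => ((Finset.Icc (A i) (C (A i))).filter (fun k => t k ∈ P s')).Nonempty)))) := by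
            intro s s' hss
            rcases lt_or_gt_of_ne hss with h | h
            · exact Finset.disjoint_left.mpr (fun i hi hi' => (hkey s s' h i hi hi').elim)
            · exact Finset.disjoint_left.mpr (fun i hi hi' => (hkey s' s h i hi' hi).elim)
          have h3 : ∀ s : Fin r, (∑ i ∈ (W.filter (fun i => ((Finset.Icc (A i) (C (A i))).filter (fun k => t k ∈ P s)).Nonempty)), (∑ k ∈ (Finset.Icc (A i) (C (A i))).filter (fun k => t k ∈ P s), M (A i) k))
              ≤ 8 / (t (A (j + 2)) : ℝ)
                + ∑ i ∈ ((W.filter (fun i => ((Finset.Icc (A i) (C (A i))).filter (fun k => t k ∈ P s)).Nonempty))).erase (finMin (W.filter (fun i => ((Finset.Icc (A i) (C (A i))).filter (fun k => t k ∈ P s)).Nonempty))), 8 / (t (A i) : ℝ) := by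
            intro s
            by_cases hIne : ((W.filter (fun i => ((Finset.Icc (A i) (C (A i))).filter (fun k => t k ∈ P s)).Nonempty))).Nonempty
            · have hfm : finMin (W.filter (fun i => ((Finset.Icc (A i) (C (A i))).filter (fun k => t k ∈ P s)).Nonempty)) ∈ (W.filter (fun i => ((Finset.Icc (A i) (C (A i))).filter (fun k => t k ∈ P s)).Nonempty)) := finMin_mem hIne
              have hsum : (∑ i ∈ (W.filter (fun i => ((Finset.Icc (A i) (C (A i))).filter (fun k => t k ∈ P s)).Nonempty)), (∑ k ∈ (Finset.Icc (A i) (C (A i))).filter (fun k => t k ∈ P s), M (A i) k))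
                  = (∑ k ∈ (Finset.Icc (A (finMin (W.filter (fun i => ((Finset.Icc (A i) (C (A i))).filter (fun k => t k ∈ P s)).Nonempty)))) (C (A (finMin (W.filter (fun i => ((Finset.Icc (A i) (C (A i))).filter (fun k => t k ∈ P s)).Nonempty)))))).filter (fun k => t k ∈ P s), M (A (finMin (W.filter (fun i => ((Finset.Icc (A i) (C (A i))).filter (fun k => t k ∈ P s)).Nonempty)))) k)
                    + ∑ i ∈ ((W.filter (fun i => ((Finset.Icc (A i) (C (A i))).filter (fun k => t k ∈ P s)).Nonempty))).erase (finMin (W.filter (fun i => ((Finset.Icc (A i) (C (A i))).filter (fun k => t k ∈ P s)).Nonempty))), (∑ k ∈ (Finset.Icc (A i) (C (A i))).filter (fun k => t k ∈ P s), M (A i) k) :=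
                (Finset.add_sum_erase _ _ hfm).symm
              rw [hsum]
              apply add_le_add
              · calc (∑ k ∈ (Finset.Icc (A (finMin (W.filter (fun i => ((Finset.Icc (A i) (C (A i))).filter (fun k => t k ∈ P s)).Nonempty)))) (C (A (finMin (W.filter (fun i => ((Finset.Icc (A i) (C (A i))).filter (fun k => t k ∈ P s)).Nonempty)))))).filter (fun k => t k ∈ P s), M (A (finMin (W.filter (fun i => ((Finset.Icc (A i) (C (A i))).filter (fun k => t k ∈ P s)).Nonempty)))) k)
                    ≤ 8 / (t (A (finMin (W.filter (fun i => ((Finset.Icc (A i) (C (A i))).filter (fun k => t k ∈ P s)).Nonempty)))) : ℝ) := hT _ s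
                  _ ≤ 8 / (t (A (j + 2)) : ℝ) := by
                      apply div_le_div_of_nonneg_left (by norm_num) (htApos (j + 2))
                      have hge : j + 2 ≤ finMin (W.filter (fun i => ((Finset.Icc (A i) (C (A i))).filter (fun k => t k ∈ P s)).Nonempty)) := by
                        have hmem := Finset.filter_subset _ _ hfm
                        rw [hWdef, Finset.mem_Ico] at hmem
                        exact hmem.1
                      exact_mod_cast ht.monotone (hAmono.monotone hge)
              · exact Finset.sum_le_sum (fun i _ => hT i s)
            · rw [Finset.not_nonempty_iff_eq_empty] at hIne
              rw [hIne]
              simp only [Finset.sum_empty, Finset.erase_empty]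
              positivity
          calc ∑ s : Fin r, ∑ i ∈ (W.filter (fun i => ((Finset.Icc (A i) (C (A i))).filter (fun k => t k ∈ P s)).Nonempty)), (∑ k ∈ (Finset.Icc (A i) (C (A i))).filter (fun k => t k ∈ P s), M (A i) k)
              ≤ ∑ s : Fin r, (8 / (t (A (j + 2)) : ℝ)
                  + ∑ i ∈ ((W.filter (fun i => ((Finset.Icc (A i) (C (A i))).filter (fun k => t k ∈ P s)).Nonempty))).erase (finMin (W.filter (fun i => ((Finset.Icc (A i) (C (A i))).filter (fun k => t k ∈ P s)).Nonempty))), 8 / (t (A i) : ℝ)) :=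
                Finset.sum_le_sum (fun s _ => h3 s)
            _ = (r : ℝ) * (8 / (t (A (j + 2)) : ℝ))
                  + ∑ s : Fin r, ∑ i ∈ ((W.filter (fun i => ((Finset.Icc (A i) (C (A i))).filter (fun k => t k ∈ P s)).Nonempty))).erase (finMin (W.filter (fun i => ((Finset.Icc (A i) (C (A i))).filter (fun k => t k ∈ P s)).Nonempty))),
                      8 / (t (A i) : ℝ) := by
                rw [Finset.sum_add_distrib, Finset.sum_const, Finset.card_univ,
                  Fintype.card_fin, nsmul_eq_mul]
            _ ≤ 4 + 1 := by
                apply add_le_add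
                · have hTpos := htApos (j + 2)
                  have hcast : (2 * r : ℝ) ≤ (t (A (j + 2)) : ℝ) := by exact_mod_cast hrb
                  rw [show (r:ℝ) * (8 / (t (A (j + 2)) : ℝ))
                      = 8 * r / (t (A (j + 2)) : ℝ) from by ring, div_le_iff₀ hTpos]
                  nlinarith
                · calc ∑ s : Fin r, ∑ i ∈ ((W.filter (fun i => ((Finset.Icc (A i) (C (A i))).filter (fun k => t k ∈ P s)).Nonempty))).erase (finMin (W.filter (fun i => ((Finset.Icc (A i) (C (A i))).filter (fun k => t k ∈ P s)).Nonempty))),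
                        8 / (t (A i) : ℝ)
                      = ∑ i ∈ Finset.univ.biUnion
                          (fun s : Fin r => ((W.filter (fun i => ((Finset.Icc (A i) (C (A i))).filter (fun k => t k ∈ P s)).Nonempty))).erase (finMin (W.filter (fun i => ((Finset.Icc (A i) (C (A i))).filter (fun k => t k ∈ P s)).Nonempty)))),
                          8 / (t (A i) : ℝ) :=
                        (Finset.sum_biUnion (fun s _ s' _ h => hEdisj s s' h)).symm
                    _ ≤ ∑ i ∈ Finset.range d, 8 / (t (A i) : ℝ) := by
                        apply Finset.sum_le_sum_of_subset_of_nonneg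
                        · intro i hi
                          simp only [Finset.mem_biUnion, Finset.mem_univ, true_and] at hi
                          obtain ⟨s, hi⟩ := hi
                          exact hWsub i (Finset.filter_subset _ _
                            (Finset.mem_of_mem_erase hi))
                        · intro i _ _
                          positivity
                    _ ≤ ∑ i ∈ Finset.range d, (8/(d:ℝ)) * (1/2:ℝ)^i := by
                        apply Finset.sum_le_sum
                        intro i _
                        have h2 : (8:ℝ) / (t (A i) : ℝ) ≤ 8 / ((2:ℝ)^i * d) := by
                          apply div_le_div_of_nonneg_left (by norm_num) (by positivity)
                          exact_mod_cast hpow i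
                        have heq : (8:ℝ) / ((2:ℝ)^i * d) = (8/(d:ℝ)) * (1/2:ℝ)^i := by
                          rw [div_pow, one_pow]
                          field_simp
                        rw [← heq]
                        exact h2
                    _ = (8/(d:ℝ)) * ∑ i ∈ Finset.range d, (1/2:ℝ)^i := by
                        rw [Finset.mul_sum]
                    _ ≤ (8/(d:ℝ)) * 2 :=
                        mul_le_mul_of_nonneg_left (sum_geometric_two_le d) (by positivity)
                    _ ≤ 1 := by
                        have h16 : (16:ℝ) ≤ d := by exact_mod_cast hd16
                        rw [show (8/(d:ℝ)) * 2 = 16/(d:ℝ) from by ring,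
                          div_le_one hdpos]
                        exact h16
            _ = 5 := by norm_num
        -- combine
        have hmain : (∑ i ∈ Finset.range d, (∑ k ∈ (Finset.Icc (A i) (C (A i))).filter (fun k => t k ∈ G), M (A i) k)) ≤ 7 := by
          rw [← Finset.sum_filter_add_sum_filter_not (Finset.range d) (fun i => i < j + 2)]
          have htail' : ∑ i ∈ (Finset.range d).filter (fun i => ¬ i < j + 2),
              (∑ k ∈ (Finset.Icc (A i) (C (A i))).filter (fun k => t k ∈ G), M (A i) k) ≤ 5 := by
            rw [hfilW]
            exact htail
          linarith
        calc ∑ i ∈ Finset.range d,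
              ∑ k ∈ (Finset.Icc (A i) (C (A i))).filter (fun k => t k ∈ G),
                M (A i) k / (d:ℝ)
            = (∑ i ∈ Finset.range d, (∑ k ∈ (Finset.Icc (A i) (C (A i))).filter (fun k => t k ∈ G), M (A i) k)) / (d:ℝ) := by
              rw [Finset.sum_div]
              exact Finset.sum_congr rfl hScast
          _ ≤ 7 / (d:ℝ) := div_le_div_of_nonneg_right hmain hdpos.le
          _ ≤ 8 / ((t a : ℕ) : ℝ) := by
              rw [htad]
              exact div_le_div_of_nonneg_right (by norm_num) hdpos.le

lemma key {t : ℕ → ℕ} (ht : StrictMono t) (n : ℕ) (hn : 1 ≤ n) :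
    ∀ a, 16 ≤ a → KeyProp t n a := by
  induction n, hn using Nat.le_induction with
  | base => exact fun a ha => key_base ht a ha
  | succ n hn ih => exact fun a ha => key_step ht hn ih a ha

lemma minsupp_le_maxsupp {f : ℕ →₀ ℝ} (h : f.support.Nonempty) :
    minsupp f ≤ maxsupp f := by
  have hS : {k | f k ≠ 0} = ↑f.support := by
    ext k
    simp [Finsupp.mem_support_iff]
  have hfin : {k | f k ≠ 0}.Finite := by
    rw [hS]
    exact f.support.finite_toSet
  have hne' : {k | f k ≠ 0}.Nonempty := by
    obtain ⟨k, hk⟩ := h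
    exact ⟨k, by simpa [Finsupp.mem_support_iff] using hk⟩
  exact csInf_le_csSup hne' (OrderBot.bddBelow _) hfin.bddAbove

/-- **Existence of special convex combinations.** Let `(y_k)` be a block
sequence in `c_00`, `ε > 0` and `n ≥ 1`.  Then there exist a finite interval `E ⊆ ℕ` and
nonnegative coefficients `(b_k)_{k∈E}` with `∑_{k∈E} b_k² = 1` such that
`∑_{k∈E} b_k y_k` is a `(2, ε, n)`-special convex combination: with `t_k = maxsupp y_k`,
the set `{t_k : k ∈ E}` belongs to `S_n`, while `(∑_{k∈E, t_k∈G} b_k²)^{1/2} < ε` for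
every `G ∈ S_m` with `m < n`. -/
theorem exists_scc (y : ℕ → ℕ →₀ ℝ)
    (hne : ∀ k, (y k).support.Nonempty)
    (hblock : ∀ k, maxsupp (y k) < minsupp (y (k + 1)))
    (ε : ℝ) (hε : 0 < ε) (n : ℕ) (hn : 1 ≤ n) :
    ∃ a c : ℕ, ∃ b : ℕ → ℝ,
      (∀ k, 0 ≤ b k) ∧
      (∑ k ∈ Finset.Icc a c, (b k) ^ 2) = 1 ∧
      ((Finset.Icc a c).image fun k => maxsupp (y k)) ∈ Schreier n ∧
      ∀ m < n, ∀ G ∈ Schreier m,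
        Real.sqrt (∑ k ∈ (Finset.Icc a c).filter (fun k => maxsupp (y k) ∈ G),
          (b k) ^ 2) < ε := by
  have htmono : StrictMono (fun k => maxsupp (y k)) :=
    strictMono_nat_of_lt_succ
      (fun k => lt_of_lt_of_le (hblock k) (minsupp_le_maxsupp (hne (k + 1))))
  set a0 : ℕ := max 16 (Nat.floor (8 / ε ^ 2) + 1) with ha0
  have ha16 : 16 ≤ a0 := le_max_left _ _
  obtain ⟨c, μ, hac, hc1, hμ0, hμsum, hμmem, hμest⟩ := key htmono n hn a0 ha16
  have hta : (8 : ℝ) / (maxsupp (y a0) : ℝ) < ε ^ 2 := by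
    have h0 : a0 ≤ maxsupp (y a0) := le_t htmono a0
    have h1 : (8 / ε ^ 2 : ℝ) < (maxsupp (y a0) : ℝ) := by
      calc (8 / ε ^ 2 : ℝ) < ((Nat.floor (8 / ε ^ 2) : ℕ) : ℝ) + 1 :=
            Nat.lt_floor_add_one _
        _ ≤ (a0 : ℝ) := by
            have : Nat.floor (8 / ε ^ 2) + 1 ≤ a0 := le_max_right _ _
            exact_mod_cast this
        _ ≤ _ := by exact_mod_cast h0
    have hTpos : (0 : ℝ) < (maxsupp (y a0) : ℝ) := by
      have : 0 < maxsupp (y a0) := by omega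
      exact_mod_cast this
    rw [div_lt_iff₀ hTpos]
    have := (div_lt_iff₀ (pow_pos hε 2)).mp h1
    nlinarith
  refine ⟨a0, c, fun k => Real.sqrt (μ k), fun k => Real.sqrt_nonneg _, ?_, ?_, ?_⟩
  · have heq : ∀ k ∈ Finset.Icc a0 c, Real.sqrt (μ k) ^ 2 = μ k :=
      fun k _ => Real.sq_sqrt (hμ0 k)
    rw [Finset.sum_congr rfl heq]
    exact hμsum
  · exact hμmem
  · intro m hm G hG
    have heq : ∀ k ∈ (Finset.Icc a0 c).filter (fun k => maxsupp (y k) ∈ G),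
        Real.sqrt (μ k) ^ 2 = μ k := fun k _ => Real.sq_sqrt (hμ0 k)
    rw [Finset.sum_congr rfl heq]
    apply (Real.sqrt_lt' hε).mpr
    calc (∑ k ∈ (Finset.Icc a0 c).filter (fun k => maxsupp (y k) ∈ G), μ k)
        ≤ 8 / (maxsupp (y a0) : ℝ) := hμest m hm G hG
      _ < ε ^ 2 := hta
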